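/- Let k ≥ 2 and n₁ ≥ n₂ ≥ ... ≥ n_k ≥ 1 be integers, and let Δ be a real number such that there exist m ∈ ℕ and a matrix A ∈ [0,1]^{n′×m}, with n′ = ⌊n₁/2⌋, whose (1/k)-weighted discrepancy satisfies wdisc_{1/k}(A) ≥ Δ. Then for every real c < Δ/2, there exists a group fair division instance with group sizes n₁,...,n_k (with all item utilities in [0,1]) that admits no EFc allocation. Consequently, c^EF(n₁,...,n_k) ≥ wdisc^max_{1/k}(⌊n₁/2⌋)/2. -/

import Mathlib

open Finset

/-- The `∞`-norm of a vector: the maximum absolute value of a coordinate. -/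
noncomputable def infNorm {n : ℕ} (v : Fin n → ℝ) : ℝ := ⨆ i, |v i|

/-- The `p`-weighted discrepancy of a matrix `A ∈ [0,1]^{n×m}`:
`wdisc_p(A) = min over x ∈ {0,1}^m of ‖A(p·𝟏 − x)‖_∞`. -/
noncomputable def wdisc (p : ℝ) {n m : ℕ} (A : Matrix (Fin n) (Fin m) ℝ) : ℝ :=
  ⨅ x : Fin m → Fin 2, infNorm (A.mulVec (fun j => p - ((x j : ℕ) : ℝ)))

/-- The bundle of group `i` under the allocation `χ : [m] → [k]`. -/
def bundle {k m : ℕ} (χ : Fin m → Fin k) (i : Fin k) : Finset (Fin m) :=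
  Finset.univ.filter (fun g => χ g = i)

/-- An allocation `χ` is envy-free up to `c` goods (EF`c`): for all `i, i' ∈ [k]` and
`j ∈ [n_i]` there exists `B ⊆ G` with `|B| ≤ c` such that
`u^{(i,j)}(A_i) ≥ u^{(i,j)}(A_{i'} \ B)`. -/
def IsEF {k m : ℕ} (ns : Fin k → ℕ) (u : ∀ i : Fin k, Fin (ns i) → Fin m → ℝ)
    (χ : Fin m → Fin k) (c : ℝ) : Prop :=
  ∀ (i i' : Fin k) (j : Fin (ns i)), ∃ B : Finset (Fin m),
    (B.card : ℝ) ≤ c ∧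
    ∑ g ∈ bundle χ i, u i j g ≥ ∑ g ∈ bundle χ i' \ B, u i j g

lemma wdisc_of_rows_eq_zero {n m : ℕ} (hn : n = 0) (p : ℝ)
    (A : Matrix (Fin n) (Fin m) ℝ) : wdisc p A = 0 := by
  subst hn
  have h : ∀ x : Fin m → Fin 2,
      infNorm (A.mulVec (fun j => p - ((x j : ℕ) : ℝ))) = 0 := by
    intro x
    rw [infNorm, iSup, Set.range_eq_empty, Real.sSup_empty]
  rw [wdisc]
  simp only [h]
  exact ciInf_const

lemma aux_main {k m n' : ℕ} (hk : 2 ≤ k) (ns : Fin k → ℕ) (hpos : ∀ i, 1 ≤ ns i)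
    (i0 : Fin k) (hn1 : 1 ≤ n') (hn2 : 2 * n' ≤ ns i0)
    (A : Matrix (Fin n') (Fin m) ℝ) (hA : ∀ i j, A i j ∈ Set.Icc (0:ℝ) 1)
    (Δ c : ℝ) (hwd : Δ ≤ wdisc (1/(k:ℝ)) A) (hc : c < Δ/2) (hc0 : 0 ≤ c) :
    ∃ u : ∀ i : Fin k, Fin (ns i) → Fin m → ℝ,
      (∀ i j g, u i j g ∈ Set.Icc (0:ℝ) 1) ∧ ∀ χ : Fin m → Fin k, ¬ IsEF ns u χ c := by
  classical
  have hΔpos : 0 < Δ := by linarith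
  set U : ∀ i : Fin k, Fin (ns i) → Fin m → ℝ := fun i j g =>
    if i = i0 then
      (if h : (j:ℕ) < n' then A ⟨j, h⟩ g
       else if h2 : (j:ℕ) - n' < n' then 1 - A ⟨(j:ℕ)-n', h2⟩ g else 1)
    else 1 with hU
  have hIcc : ∀ i j g, U i j g ∈ Set.Icc (0:ℝ) 1 := by
    intro i j g
    simp only [hU]
    split_ifs with h1 h2 h3
    · exact hA _ g
    · obtain ⟨l, r⟩ := hA ⟨(j:ℕ)-n', h3⟩ g
      constructor <;> simp <;> linarith
    · exact ⟨zero_le_one, le_refl 1⟩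
    · exact ⟨zero_le_one, le_refl 1⟩
  refine ⟨U, hIcc, ?_⟩
  intro χ hEF
  set x : Fin m → Fin 2 := fun g => if χ g = i0 then 1 else 0 with hx
  have hbdd : BddBelow (Set.range fun y : Fin m → Fin 2 =>
      infNorm (A.mulVec fun j => 1/(k:ℝ) - ((y j : ℕ):ℝ))) := by
    refine ⟨0, ?_⟩
    rintro r ⟨y, rfl⟩
    exact Real.iSup_nonneg fun i => abs_nonneg _
  have h1 : Δ ≤ infNorm (A.mulVec fun j => 1/(k:ℝ) - ((x j : ℕ):ℝ)) :=
    le_trans hwd (ciInf_le hbdd x)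
  have hne : Nonempty (Fin n') := ⟨⟨0, hn1⟩⟩
  obtain ⟨i, hi⟩ : ∃ i : Fin n',
      Δ ≤ |(A.mulVec fun j => 1/(k:ℝ) - ((x j : ℕ):ℝ)) i| := by
    obtain ⟨i, hieq⟩ := exists_eq_ciSup_of_finite
      (f := fun i : Fin n' => |(A.mulVec fun j => 1/(k:ℝ) - ((x j : ℕ):ℝ)) i|)
    rw [infNorm] at h1
    exact ⟨i, hieq ▸ h1⟩
  -- compute the entry
  have hmv : (A.mulVec fun j => 1/(k:ℝ) - ((x j : ℕ):ℝ)) i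
      = (∑ g, A i g) * (1/(k:ℝ)) - ∑ g ∈ bundle χ i0, A i g := by
    have hterm : ∀ g, A i g * (1/(k:ℝ) - ((x g : ℕ):ℝ))
        = A i g * (1/(k:ℝ)) - (if χ g = i0 then A i g else 0) := by
      intro g; by_cases h : χ g = i0 <;> simp [hx, h] <;> ring
    simp only [Matrix.mulVec, dotProduct, hterm, Finset.sum_sub_distrib,
      ← Finset.sum_mul, bundle, Finset.sum_filter]
  rw [hmv] at hi
  -- notation
  set T : ℝ := ∑ g, A i g with hT
  set P : ℝ := ∑ g ∈ bundle χ i0, A i g with hP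
  have hfib : ∀ f : Fin m → ℝ, ∑ i' : Fin k, ∑ g ∈ bundle χ i', f g = ∑ g, f g := by
    intro f
    simp only [bundle]
    exact Finset.sum_fiberwise univ χ f
  have hsplit : ∀ F : Fin k → ℝ,
      ∑ i' ∈ Finset.univ.erase i0, F i' = (∑ i' : Fin k, F i') - F i0 := by
    intro F
    rw [← Finset.sum_erase_add univ F (mem_univ i0)]
    ring
  have htrim : ∀ (f : Fin m → ℝ), (∀ g, f g ≤ 1) → ∀ (S B : Finset (Fin m)),
      ∑ g ∈ S, f g - (B.card:ℝ) ≤ ∑ g ∈ S \ B, f g := by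
    intro f hf S B
    have h1 := Finset.sum_inter_add_sum_sdiff S B f
    have h2 : ∑ g ∈ S ∩ B, f g ≤ ((S ∩ B).card : ℝ) := by
      calc ∑ g ∈ S ∩ B, f g ≤ ∑ _g ∈ S ∩ B, (1:ℝ) :=
            Finset.sum_le_sum fun g _ => hf g
        _ = ((S ∩ B).card : ℝ) := by simp
    have h3 : ((S ∩ B).card:ℝ) ≤ (B.card:ℝ) := by
      exact_mod_cast Finset.card_le_card Finset.inter_subset_right
    linarith
  have hstep : ∀ (iA i' : Fin k) (j : Fin (ns iA)),
      ∑ g ∈ bundle χ i', U iA j g - c ≤ ∑ g ∈ bundle χ iA, U iA j g := by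
    intro iA i' j
    obtain ⟨B, hB, hge⟩ := hEF iA i' j
    have := htrim (U iA j) (fun g => (hIcc iA j g).2) (bundle χ i') B
    linarith
  have hj1 : (i:ℕ) < ns i0 := by have := i.isLt; omega
  have hj2 : n' + (i:ℕ) < ns i0 := by have := i.isLt; omega
  have hU1 : ∀ g, U i0 ⟨(i:ℕ), hj1⟩ g = A i g := by
    intro g
    simp [hU, i.isLt]
  have hU2 : ∀ g, U i0 ⟨n' + (i:ℕ), hj2⟩ g = 1 - A i g := by
    intro g
    have h1 : ¬ (n' + (i:ℕ) < n') := by omega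
    have h2 : n' + (i:ℕ) - n' < n' := by have := i.isLt; omega
    have h3 : (⟨n' + (i:ℕ) - n', h2⟩ : Fin n') = i := by
      ext
      simp only [Fin.val_mk]
      omega
    simp [hU, h1, h2, h3]
  have hU3 : ∀ (i' : Fin k), i' ≠ i0 → ∀ (j : Fin (ns i')) g, U i' j g = 1 := by
    intro i' hne' j g
    simp only [hU, if_neg hne']
  -- cards
  set K : ℝ := (k:ℝ) with hK
  have hK2 : (2:ℝ) ≤ K := by rw [hK]; exact_mod_cast hk
  have hKpos : (0:ℝ) < K := by linarith
  have hcard : ((univ.erase i0).card : ℝ) = K - 1 := by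
    rw [Finset.card_erase_of_mem (mem_univ _), Finset.card_univ, Fintype.card_fin]
    have : 1 ≤ k := by omega
    push_cast [Nat.cast_sub this]
    ring
  -- inequality (a)
  have ha : ∀ i' ∈ univ.erase i0, (∑ g ∈ bundle χ i', A i g) - c ≤ P := by
    intro i' _
    have h := hstep i0 i' ⟨(i:ℕ), hj1⟩
    rw [Finset.sum_congr rfl (fun g _ => hU1 g), Finset.sum_congr rfl (fun g _ => hU1 g)] at h
    exact h
  have hsa : T - P - (K - 1) * c ≤ (K - 1) * P := by
    have h0 : ∑ i' ∈ univ.erase i0, ((∑ g ∈ bundle χ i', A i g) - c)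
        ≤ ∑ _i' ∈ univ.erase i0, P := Finset.sum_le_sum ha
    rw [Finset.sum_sub_distrib, Finset.sum_const, Finset.sum_const,
      hsplit (fun i' => ∑ g ∈ bundle χ i', A i g), hfib] at h0
    rw [nsmul_eq_mul, nsmul_eq_mul, hcard] at h0
    linarith
  -- inequality (b)
  set s0 : ℝ := ((bundle χ i0).card : ℝ) with hs0
  have hcard_sum : ∑ i' : Fin k, ((bundle χ i').card : ℝ) = (m:ℝ) := by
    have := hfib (fun _ => (1:ℝ))
    simpa using this
  have hb : ∀ i' ∈ univ.erase i0,
      (∑ g ∈ bundle χ i', (1 - A i g)) - c ≤ s0 - P := by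
    intro i' _
    have h := hstep i0 i' ⟨n' + (i:ℕ), hj2⟩
    rw [Finset.sum_congr rfl (fun g _ => hU2 g), Finset.sum_congr rfl (fun g _ => hU2 g)] at h
    rw [Finset.sum_sub_distrib] at h
    simpa [hs0, hP] using h
  have hsb : ((m:ℝ) - T) - (s0 - P) - (K - 1) * c ≤ (K - 1) * (s0 - P) := by
    have h0 : ∑ i' ∈ univ.erase i0, ((∑ g ∈ bundle χ i', (1 - A i g)) - c)
        ≤ ∑ _i' ∈ univ.erase i0, (s0 - P) := Finset.sum_le_sum hb
    rw [Finset.sum_sub_distrib, Finset.sum_const, Finset.sum_const,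
      hsplit (fun i' => ∑ g ∈ bundle χ i', (1 - A i g)), hfib] at h0
    rw [nsmul_eq_mul, nsmul_eq_mul, hcard] at h0
    have hexp : ∑ g : Fin m, (1 - A i g) = (m:ℝ) - T := by
      rw [Finset.sum_sub_distrib]; simp [hT]
    have hexp0 : ∑ g ∈ bundle χ i0, (1 - A i g) = s0 - P := by
      rw [Finset.sum_sub_distrib]; simp [hs0, hP]
    rw [hexp, hexp0] at h0
    linarith
  -- inequality (c)
  have hcc : ∀ i' ∈ univ.erase i0, s0 - c ≤ ((bundle χ i').card : ℝ) := by
    intro i' hmem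
    have hne' : i' ≠ i0 := (Finset.mem_erase.mp hmem).1
    have h := hstep i' i0 ⟨0, hpos i'⟩
    rw [Finset.sum_congr rfl (fun g _ => hU3 i' hne' _ g),
      Finset.sum_congr rfl (fun g _ => hU3 i' hne' _ g)] at h
    simp only [Finset.sum_const, nsmul_eq_mul, mul_one] at h
    linarith
  have hsc : (K - 1) * (s0 - c) ≤ (m:ℝ) - s0 := by
    have h0 : ∑ _i' ∈ univ.erase i0, (s0 - c)
        ≤ ∑ i' ∈ univ.erase i0, ((bundle χ i').card : ℝ) := Finset.sum_le_sum hcc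
    rw [Finset.sum_const, hsplit (fun i' => ((bundle χ i').card : ℝ)), hcard_sum,
      nsmul_eq_mul, hcard] at h0
    linarith
  -- conclude
  rcases le_abs.mp hi with hcase | hcase
  · -- Δ ≤ T/K - P
    have hmul : K * Δ ≤ K * (T * (1/K) - P) :=
      mul_le_mul_of_nonneg_left hcase (le_of_lt hKpos)
    have hKT : K * (T * (1/K) - P) = T - K * P := by
      field_simp
    rw [hKT] at hmul
    have h2 := mul_lt_mul_of_pos_left hc hKpos
    nlinarith [mul_pos hKpos hΔpos]
  · -- Δ ≤ P - T/K
    have hmul : K * Δ ≤ K * (-(T * (1/K) - P)) :=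
      mul_le_mul_of_nonneg_left hcase (le_of_lt hKpos)
    have hKT : K * (-(T * (1/K) - P)) = K * P - T := by
      field_simp
      ring
    rw [hKT] at hmul
    have h2 := mul_lt_mul_of_pos_left hc hKpos
    nlinarith [mul_pos hKpos hΔpos]

/-- Let `k ≥ 2` and `n₁ ≥ ⋯ ≥ n_k ≥ 1` be integers (given as an
antitone `ns : Fin k → ℕ`), and let `Δ` be such that some matrix
`A ∈ [0,1]^{⌊n₁/2⌋ × m}` has `wdisc_{1/k}(A) ≥ Δ`.  Then for every real `c < Δ/2`
there exists a group fair division instance with group sizes `n₁, …, n_k` and all item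
utilities in `[0,1]` that admits no EF`c` allocation.  Consequently
`c^EF(n₁,…,n_k) ≥ wdisc^max_{1/k}(⌊n₁/2⌋)/2`. -/
theorem ef_lower_bound_from_wdisc (k : ℕ) (hk : 2 ≤ k) (ns : Fin k → ℕ)
    (hmono : ∀ a b : Fin k, a ≤ b → ns b ≤ ns a) (hpos : ∀ i, 1 ≤ ns i)
    (Δ : ℝ)
    (hΔ : ∃ (m : ℕ) (A : Matrix (Fin (ns ⟨0, by omega⟩ / 2)) (Fin m) ℝ),
      (∀ i j, A i j ∈ Set.Icc (0 : ℝ) 1) ∧ Δ ≤ wdisc (1 / (k : ℝ)) A) :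
    ∀ c : ℝ, c < Δ / 2 →
      ∃ (m : ℕ) (u : ∀ i : Fin k, Fin (ns i) → Fin m → ℝ),
        (∀ i j g, u i j g ∈ Set.Icc (0 : ℝ) 1) ∧
        ∀ χ : Fin m → Fin k, ¬ IsEF ns u χ c := by
    classical
  intro c hc
  by_cases hc0 : 0 ≤ c
  · obtain ⟨m, A, hA, hwd⟩ := hΔ
    rcases Nat.eq_zero_or_pos (ns (⟨0, by omega⟩ : Fin k) / 2) with hn | hn
    · exfalso
      rw [wdisc_of_rows_eq_zero hn (1/(k:ℝ)) A] at hwd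
      linarith
    · exact ⟨m, aux_main hk ns hpos ⟨0, by omega⟩ hn
        (by rw [Nat.mul_comm]; exact Nat.div_mul_le_self _ 2) A hA Δ c hwd hc hc0⟩
  · refine ⟨0, fun _ _ _ => 0,
      fun i j g => Set.mem_Icc.mpr ⟨le_refl 0, zero_le_one⟩, fun χ hEF => ?_⟩
    obtain ⟨B, hB, -⟩ := hEF ⟨0, by omega⟩ ⟨0, by omega⟩ ⟨0, hpos _⟩
    have h0 : (0:ℝ) ≤ (B.card : ℝ) := Nat.cast_nonneg _
    push_neg at hc0
    linarith
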